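/- arXiv:2107.05951 — 4 statements merged into one kernel-verified Lean document; each statement's English description precedes it below -/
import Mathlib

section
/- Let f : ℝⁿ → ℝ be convex and differentiable with ‖∇f(x)‖₂ ≤ G for all x ∈ ℝⁿ, let r > 0, and let ‖·‖_* be a norm on ℝⁿ and p > 0 a constant such that (E_e[‖e‖_*⁴])^{1/2} ≤ p². Assume the smoothed function F(x) = E_e[f(x + r e)] is differentiable with ∇F(x) = (n/r) E_e[f(x + r e) e]. Then for every x ∈ ℝⁿ, ‖∇F(x)‖_* ≤ 2 √n p G. -/
open MeasureTheory Metric Set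

/-- The uniform probability distribution of a random vector `e` on the unit Euclidean
sphere `S^{n-1}`: the normalized restriction of the `(n-1)`-dimensional Hausdorff
measure to the sphere. -/
noncomputable def sphereUniform (n : ℕ) : Measure (EuclideanSpace ℝ (Fin n)) :=
  (μH[(n : ℝ) - 1] (sphere (0 : EuclideanSpace ℝ (Fin n)) 1))⁻¹ •
    (μH[(n : ℝ) - 1]).restrict (sphere (0 : EuclideanSpace ℝ (Fin n)) 1)

section aux

variable {n : ℕ}

/-- invariance of `sphereUniform` under linear isometry equivalences -/
theorem sphereUniform_map (Q : EuclideanSpace ℝ (Fin n) ≃ₗᵢ[ℝ] EuclideanSpace ℝ (Fin n)) :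
    Measure.map Q (sphereUniform n) = sphereUniform n := by
  have hQmeas : Measurable (Q : EuclideanSpace ℝ (Fin n) → EuclideanSpace ℝ (Fin n)) :=
    Q.continuous.measurable
  have hS : MeasurableSet (sphere (0 : EuclideanSpace ℝ (Fin n)) 1) :=
    (isClosed_sphere).measurableSet
  have hpre : (Q : EuclideanSpace ℝ (Fin n) → EuclideanSpace ℝ (Fin n)) ⁻¹'
      (sphere (0 : EuclideanSpace ℝ (Fin n)) 1) = sphere (0 : EuclideanSpace ℝ (Fin n)) 1 := by
    ext z
    simp [mem_sphere_zero_iff_norm, Q.norm_map]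
  have hmapH : Measure.map (Q : EuclideanSpace ℝ (Fin n) → EuclideanSpace ℝ (Fin n))
      (μH[(n : ℝ) - 1]) = μH[(n : ℝ) - 1] := by
    have := Q.toIsometryEquiv.map_hausdorffMeasure ((n : ℝ) - 1)
    simpa using this
  have key : Measure.map (Q : EuclideanSpace ℝ (Fin n) → EuclideanSpace ℝ (Fin n))
      ((μH[(n : ℝ) - 1]).restrict (sphere (0 : EuclideanSpace ℝ (Fin n)) 1)) =
      (μH[(n : ℝ) - 1]).restrict (sphere (0 : EuclideanSpace ℝ (Fin n)) 1) := by
    conv_lhs => rw [← hpre]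
    rw [← Measure.restrict_map hQmeas hS, hmapH]
  rw [sphereUniform, Measure.map_smul, key]

end aux

set_option maxHeartbeats 1000000 in
/-- if `f` is convex and differentiable with `‖∇f(x)‖₂ ≤ G`, `r > 0`,
`‖·‖_*` is a norm on `ℝⁿ` with `(𝔼_e ‖e‖_*⁴)^{1/2} ≤ p²` for a constant `p > 0`, and
the smoothed function `F x = 𝔼_e [f (x + r e)]` is differentiable with
`∇F(x) = (n/r) 𝔼_e [f (x + r e) e]`, then `‖∇F(x)‖_* ≤ 2 √n p G` for every `x`. -/
theorem smoothed_gradient_dual_norm_bound {n : ℕ} (hn : 1 ≤ n)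
    (f : EuclideanSpace ℝ (Fin n) → ℝ)
    (hf_conv : ConvexOn ℝ Set.univ f) (hf_diff : Differentiable ℝ f)
    (G : ℝ) (hG : ∀ x, ‖gradient f x‖ ≤ G)
    (r : ℝ) (hr : 0 < r)
    -- `dstar` is a norm `‖·‖_*` on `ℝⁿ`
    (dstar : EuclideanSpace ℝ (Fin n) → ℝ)
    (hd_add : ∀ x y, dstar (x + y) ≤ dstar x + dstar y)
    (hd_smul : ∀ (c : ℝ) x, dstar (c • x) = |c| * dstar x)
    (hd_def : ∀ x, dstar x = 0 → x = 0)
    (p : ℝ) (hp : 0 < p)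
    (hmom : Real.sqrt (∫ e, (dstar e) ^ 4 ∂(sphereUniform n)) ≤ p ^ 2)
    (hF_diff : Differentiable ℝ (fun x => ∫ e, f (x + r • e) ∂(sphereUniform n)))
    (hF_grad : ∀ x, gradient (fun x => ∫ e, f (x + r • e) ∂(sphereUniform n)) x =
        ((n : ℝ) / r) • ∫ e, f (x + r • e) • e ∂(sphereUniform n)) :
    ∀ x, dstar (gradient (fun x => ∫ e, f (x + r • e) ∂(sphereUniform n)) x) ≤
      2 * Real.sqrt n * p * G := by
  intro x
  set μ := sphereUniform n with hμdef
  set F := (fun x => ∫ e, f (x + r • e) ∂μ) with hFdef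
  -- basic facts about dstar
  have hd0 : dstar 0 = 0 := by
    have := hd_smul 0 0
    simpa using this
  have hd_nonneg : ∀ y, 0 ≤ dstar y := by
    intro y
    have h1 : dstar (y + (-1 : ℝ) • y) ≤ dstar y + dstar ((-1 : ℝ) • y) := hd_add _ _
    have h2 : dstar ((-1 : ℝ) • y) = dstar y := by rw [hd_smul]; simp
    have h3 : y + (-1 : ℝ) • y = 0 := by simp
    rw [h3, hd0, h2] at h1
    linarith
  have hd_neg : ∀ y, dstar (-y) = dstar y := by
    intro y
    have := hd_smul (-1) y
    simpa using this
  have hG0 : 0 ≤ G := le_trans (norm_nonneg _) (hG 0)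
  have hRHS0 : 0 ≤ 2 * Real.sqrt n * p * G := by positivity
  by_cases hdeg : μ = 0
  · -- degenerate case: the measure is zero
    have hv0 : gradient F x = 0 := by
      rw [hFdef, hF_grad x, hdeg]
      simp
    rw [hv0, hd0]
    exact hRHS0
  -- non-degenerate case: μ is a probability measure
  have hc0 : μH[(n : ℝ) - 1] (sphere (0 : EuclideanSpace ℝ (Fin n)) 1) ≠ 0 := by
    intro h
    apply hdeg
    have h0 : (μH[(n : ℝ) - 1]).restrict (sphere (0 : EuclideanSpace ℝ (Fin n)) 1) = 0 := by
      apply Measure.measure_univ_eq_zero.mp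
      rw [Measure.restrict_apply_univ]
      exact h
    rw [hμdef, sphereUniform, h0]
    simp
  have hctop : μH[(n : ℝ) - 1] (sphere (0 : EuclideanSpace ℝ (Fin n)) 1) ≠ ⊤ := by
    intro h
    apply hdeg
    rw [hμdef, sphereUniform, h]
    simp
  have hprob : IsProbabilityMeasure μ := by
    constructor
    rw [hμdef, sphereUniform, Measure.smul_apply, Measure.restrict_apply_univ,
      smul_eq_mul, ENNReal.inv_mul_cancel hc0 hctop]
  have hSmeas : MeasurableSet (sphere (0 : EuclideanSpace ℝ (Fin n)) 1) :=
    isClosed_sphere.measurableSet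
  have hae : ∀ᵐ e ∂μ, e ∈ sphere (0 : EuclideanSpace ℝ (Fin n)) 1 := by
    rw [hμdef, sphereUniform]; refine Measure.ae_smul_measure ?_ _
    exact ae_restrict_mem hSmeas
  -- integrability of continuous functions w.r.t. μ
  have intg : ∀ g : EuclideanSpace ℝ (Fin n) → ℝ, Continuous g → Integrable g μ := by
    intro g hg
    obtain ⟨B, hB⟩ := (isCompact_sphere (0 : EuclideanSpace ℝ (Fin n)) 1).exists_bound_of_continuousOn hg.continuousOn
    refine (integrable_const B).mono' hg.aestronglyMeasurable ?_
    filter_upwards [hae] with e he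
    exact hB e he
  have hconti : ∀ i : Fin n, Continuous (fun e : EuclideanSpace ℝ (Fin n) => e i) := by
    intro i
    have : (fun e : EuclideanSpace ℝ (Fin n) => e i)
        = fun e : EuclideanSpace ℝ (Fin n) => (inner ℝ (EuclideanSpace.single i (1:ℝ)) e : ℝ) := by
      funext e
      rw [EuclideanSpace.inner_single_left]
      simp
    rw [this]
    exact Continuous.inner continuous_const continuous_id
  -- second moment of linear functionals
  have hmo2 : ∀ w : EuclideanSpace ℝ (Fin n),
      ∫ e, (inner ℝ w e : ℝ) ^ 2 ∂μ = ‖w‖ ^ 2 / n := by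
    -- first, invariance among unit vectors
    have hunit : ∀ u₁ u₂ : EuclideanSpace ℝ (Fin n), ‖u₁‖ = 1 → ‖u₂‖ = 1 →
        ∫ e, (inner ℝ u₁ e : ℝ) ^ 2 ∂μ = ∫ e, (inner ℝ u₂ e : ℝ) ^ 2 ∂μ := by
      intro u₁ u₂ h1 h2
      set Q := Submodule.reflection (ℝ ∙ (u₁ - u₂))ᗮ with hQdef
      have hQu : Q u₁ = u₂ := Submodule.reflection_sub (by rw [h1, h2])
      have hmp : MeasurePreserving Q μ μ := ⟨Q.continuous.measurable, sphereUniform_map Q⟩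
      have hint := hmp.integral_comp (Q.toHomeomorph.measurableEmbedding)
        (fun e => (inner ℝ u₂ e : ℝ) ^ 2)
      calc ∫ e, (inner ℝ u₁ e : ℝ) ^ 2 ∂μ
          = ∫ e, (inner ℝ u₂ (Q e) : ℝ) ^ 2 ∂μ := by
            congr 1
            ext e
            rw [← hQu, Q.inner_map_map]
        _ = ∫ e, (inner ℝ u₂ e : ℝ) ^ 2 ∂μ := hint
    -- value on unit vectors
    have hval : ∀ u : EuclideanSpace ℝ (Fin n), ‖u‖ = 1 →
        ∫ e, (inner ℝ u e : ℝ) ^ 2 ∂μ = 1 / n := by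
      intro u hu
      have hbnorm : ∀ i : Fin n, ‖(EuclideanSpace.single i (1:ℝ) : EuclideanSpace ℝ (Fin n))‖ = 1 := by
        intro i
        rw [EuclideanSpace.norm_single]
        simp
      have hsame : ∀ i : Fin n,
          ∫ e, ((e : EuclideanSpace ℝ (Fin n)) i) ^ 2 ∂μ = ∫ e, (inner ℝ u e : ℝ) ^ 2 ∂μ := by
        intro i
        have := hunit (EuclideanSpace.single i (1:ℝ)) u (hbnorm i) hu
        rw [← this]
        congr 1
        ext e
        rw [EuclideanSpace.inner_single_left]
        simp
      have hsumint : ∫ e, ∑ i : Fin n, ((e : EuclideanSpace ℝ (Fin n)) i) ^ 2 ∂μ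
          = ∑ i : Fin n, ∫ e, ((e : EuclideanSpace ℝ (Fin n)) i) ^ 2 ∂μ := by
        apply integral_finset_sum
        intro i _
        exact intg _ ((hconti i).pow 2)
      have hnorm1 : ∫ e, ∑ i : Fin n, ((e : EuclideanSpace ℝ (Fin n)) i) ^ 2 ∂μ = 1 := by
        have : ∀ᵐ e ∂μ, ∑ i : Fin n, ((e : EuclideanSpace ℝ (Fin n)) i) ^ 2 = 1 := by
          filter_upwards [hae] with e he
          have hne : ‖e‖ = 1 := mem_sphere_zero_iff_norm.mp he
          have := EuclideanSpace.norm_eq e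
          rw [hne] at this
          simp only [Real.norm_eq_abs, sq_abs] at this
          have h2 : Real.sqrt (∑ i : Fin n, e i ^ 2) = 1 := this.symm
          have h3 : (0:ℝ) ≤ ∑ i : Fin n, e i ^ 2 := by positivity
          nlinarith [Real.sq_sqrt h3]
        rw [integral_congr_ae this]
        simp
      have hn' : (0:ℝ) < n := by exact_mod_cast hn
      have : (n : ℝ) * ∫ e, (inner ℝ u e : ℝ) ^ 2 ∂μ = 1 := by
        rw [← hnorm1, hsumint]
        rw [Finset.sum_congr rfl (fun i _ => hsame i)]
        simp [Finset.card_univ, mul_comm]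
      field_simp at this ⊢
      linarith
    intro w
    by_cases hw : w = 0
    · subst hw
      simp
    · have hwn : ‖w‖ ≠ 0 := norm_ne_zero_iff.mpr hw
      have hu : ‖(‖w‖⁻¹ • w : EuclideanSpace ℝ (Fin n))‖ = 1 := by
        rw [norm_smul]
        simp [abs_of_nonneg (norm_nonneg w), inv_mul_cancel₀ hwn]
      have hkey := hval _ hu
      have hrw : ∀ e : EuclideanSpace ℝ (Fin n),
          (inner ℝ w e : ℝ) = ‖w‖ * (inner ℝ (‖w‖⁻¹ • w) e : ℝ) := by
        intro e
        rw [real_inner_smul_left]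
        field_simp
      calc ∫ e, (inner ℝ w e : ℝ) ^ 2 ∂μ
          = ∫ e, ‖w‖ ^ 2 * (inner ℝ (‖w‖⁻¹ • w) e : ℝ) ^ 2 ∂μ := by
            congr 1; ext e; rw [hrw e]; ring
        _ = ‖w‖ ^ 2 * ∫ e, (inner ℝ (‖w‖⁻¹ • w) e : ℝ) ^ 2 ∂μ := integral_const_mul _ _
        _ = ‖w‖ ^ 2 / n := by rw [hkey]; ring
  -- Jensen: (∫ g)² ≤ ∫ g²
  have hjen : ∀ g : EuclideanSpace ℝ (Fin n) → ℝ, Continuous g →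
      (∫ e, g e ∂μ) ^ 2 ≤ ∫ e, (g e) ^ 2 ∂μ := by
    intro g hg
    set m := ∫ e, g e ∂μ with hm
    have h0 : 0 ≤ ∫ e, (g e - m) ^ 2 ∂μ := integral_nonneg fun e => sq_nonneg _
    have i1 : Integrable (fun e => (g e) ^ 2) μ := intg _ (hg.pow 2)
    have i2 : Integrable (fun e => (2 * m) * g e) μ := (intg g hg).const_mul (2 * m)
    have hexp : ∫ e, (g e - m) ^ 2 ∂μ = (∫ e, (g e) ^ 2 ∂μ) - 2 * m * m + m ^ 2 := by
      calc ∫ e, (g e - m) ^ 2 ∂μ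
          = ∫ e, ((g e) ^ 2 - (2 * m) * g e + m ^ 2) ∂μ := by
            congr 1; funext e; ring
        _ = (∫ e, ((g e) ^ 2 - (2 * m) * g e) ∂μ) + ∫ _e, (m ^ 2 : ℝ) ∂μ := by
            exact integral_add (i1.sub i2) (integrable_const _)
        _ = ((∫ e, (g e) ^ 2 ∂μ) - ∫ e, (2 * m) * g e ∂μ) + m ^ 2 := by
            rw [integral_sub i1 i2, integral_const]; simp [measure_univ]
        _ = (∫ e, (g e) ^ 2 ∂μ) - 2 * m * m + m ^ 2 := by
            rw [integral_const_mul, ← hm]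
            try ring
    rw [hexp] at h0
    nlinarith
  -- continuity of dstar
  have hdC : ∃ C : ℝ, ∀ y : EuclideanSpace ℝ (Fin n), dstar y ≤ C * ‖y‖ := by
    refine ⟨∑ i : Fin n, dstar (EuclideanSpace.single i (1:ℝ)), fun y => ?_⟩
    have hyrep : y = ∑ i : Fin n, y i • (EuclideanSpace.single i (1:ℝ) : EuclideanSpace ℝ (Fin n)) := by
      have := (EuclideanSpace.basisFun (Fin n) ℝ).sum_repr y
      simp only [EuclideanSpace.basisFun_apply, EuclideanSpace.basisFun_repr] at this
      exact this.symm
    calc dstar y = dstar (∑ i : Fin n, y i • (EuclideanSpace.single i (1:ℝ) : EuclideanSpace ℝ (Fin n))) := by rw [← hyrep]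
      _ ≤ ∑ i : Fin n, dstar (y i • (EuclideanSpace.single i (1:ℝ) : EuclideanSpace ℝ (Fin n))) :=
          Finset.le_sum_of_subadditive dstar hd0.le hd_add _ _
      _ = ∑ i : Fin n, |y i| * dstar (EuclideanSpace.single i (1:ℝ)) := by
          exact Finset.sum_congr rfl fun i _ => hd_smul _ _
      _ ≤ ∑ i : Fin n, ‖y‖ * dstar (EuclideanSpace.single i (1:ℝ)) := by
          apply Finset.sum_le_sum
          intro i _
          apply mul_le_mul_of_nonneg_right _ (hd_nonneg _)
          have h1 : (inner ℝ (EuclideanSpace.single i (1:ℝ)) y : ℝ) = y i := by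
            rw [EuclideanSpace.inner_single_left]; simp
          have h2 := abs_real_inner_le_norm (EuclideanSpace.single i (1:ℝ)) y
          rw [h1, EuclideanSpace.norm_single] at h2
          simpa using h2
      _ = (∑ i : Fin n, dstar (EuclideanSpace.single i (1:ℝ))) * ‖y‖ := by
          rw [Finset.sum_mul]
          exact Finset.sum_congr rfl fun i _ => mul_comm _ _
  obtain ⟨C, hC⟩ := hdC
  have hd_cont : Continuous dstar := by
    have hlip : LipschitzWith (Real.toNNReal C) dstar := by
      apply LipschitzWith.of_dist_le_mul
      intro a b
      have key : ∀ u v : EuclideanSpace ℝ (Fin n), dstar u - dstar v ≤ C * ‖u - v‖ := by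
        intro u v
        have h1 := hd_add (u - v) v
        simp only [sub_add_cancel] at h1
        have h2 := hC (u - v)
        linarith
      have h3 := key a b
      have h4 := key b a
      rw [norm_sub_rev] at h4
      rw [Real.dist_eq, dist_eq_norm, abs_sub_le_iff]
      have hcoe : C ≤ (Real.toNNReal C : ℝ) := Real.le_coe_toNNReal C
      have hnn : (0:ℝ) ≤ ‖a - b‖ := norm_nonneg _
      constructor
      · exact h3.trans (mul_le_mul_of_nonneg_right hcoe hnn)
      · exact h4.trans (mul_le_mul_of_nonneg_right hcoe hnn)
    exact hlip.continuous
  -- f is G-Lipschitz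
  have hgradf : ∀ z, ‖fderiv ℝ f z‖ ≤ G := by
    intro z
    have heq : ‖fderiv ℝ f z‖ = ‖gradient f z‖ := by
      rw [gradient]
      exact ((InnerProductSpace.toDual ℝ (EuclideanSpace ℝ (Fin n))).symm.norm_map _).symm
    rw [heq]; exact hG z
  have hflipz : ∀ a b : EuclideanSpace ℝ (Fin n), ‖f a - f b‖ ≤ G * ‖a - b‖ := fun a b =>
    Convex.norm_image_sub_le_of_norm_fderiv_le (fun z _ => hf_diff z) (fun z _ => hgradf z)
      convex_univ (mem_univ b) (mem_univ a)
  -- F is G-Lipschitz, hence its gradient is bounded by G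
  have hint : ∀ z : EuclideanSpace ℝ (Fin n), Integrable (fun e => f (z + r • e)) μ := by
    intro z
    exact intg _ (hf_diff.continuous.comp (continuous_const.add (continuous_id.const_smul r)))
  have hFlip : LipschitzWith (Real.toNNReal G) F := by
    apply LipschitzWith.of_dist_le_mul
    intro a b
    have hsub : F a - F b = ∫ e, (f (a + r • e) - f (b + r • e)) ∂μ :=
      (integral_sub (hint a) (hint b)).symm
    have hb : ∀ e : EuclideanSpace ℝ (Fin n),
        ‖f (a + r • e) - f (b + r • e)‖ ≤ G * ‖a - b‖ := by
      intro e
      have h := hflipz (a + r • e) (b + r • e)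
      have h2 : (a + r • e) - (b + r • e) = a - b := by abel
      rwa [h2] at h
    have hnorm : ‖F a - F b‖ ≤ G * ‖a - b‖ := by
      rw [hsub]
      calc ‖∫ e, (f (a + r • e) - f (b + r • e)) ∂μ‖
          ≤ ∫ _e, (G * ‖a - b‖) ∂μ :=
            norm_integral_le_of_norm_le (integrable_const _) (Filter.Eventually.of_forall hb)
        _ = G * ‖a - b‖ := by simp [measure_univ]
    rw [Real.dist_eq, dist_eq_norm]
    calc |F a - F b| = ‖F a - F b‖ := rfl
      _ ≤ G * ‖a - b‖ := hnorm
      _ ≤ (Real.toNNReal G : ℝ) * ‖a - b‖ :=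
          mul_le_mul_of_nonneg_right (Real.le_coe_toNNReal G) (norm_nonneg _)
  have hvG : ‖gradient F x‖ ≤ G := by
    have h1 : ‖fderiv ℝ F x‖ ≤ (Real.toNNReal G : ℝ) := norm_fderiv_le_of_lipschitz ℝ hFlip
    have h2 : ‖gradient F x‖ = ‖fderiv ℝ F x‖ := by
      rw [gradient]
      exact (InnerProductSpace.toDual ℝ (EuclideanSpace ℝ (Fin n))).symm.norm_map _
    rw [h2, Real.coe_toNNReal G hG0] at *
    exact h1
  -- Hahn–Banach: a supporting functional of dstar at the gradient
  by_cases hv : gradient F x = 0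
  · rw [hv, hd0]
    exact hRHS0
  have hker : ∀ t : ℝ, t • (gradient F x) = 0 → t • dstar (gradient F x) = 0 := by
    intro t ht
    rcases smul_eq_zero.mp ht with h | h
    · rw [h]; simp
    · exact absurd h hv
  have hφle : ∀ z : (LinearPMap.mkSpanSingleton' (gradient F x) (dstar (gradient F x)) hker).domain,
      (LinearPMap.mkSpanSingleton' (σ := RingHom.id ℝ) (gradient F x) (dstar (gradient F x)) hker) z ≤ dstar (z : EuclideanSpace ℝ (Fin n)) := by
    rintro ⟨z, hz⟩
    have hz' : z ∈ Submodule.span ℝ {gradient F x} := by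
      have := hz
      rwa [LinearPMap.domain_mkSpanSingleton] at this
    obtain ⟨t, ht⟩ := Submodule.mem_span_singleton.mp hz'
    subst ht
    rw [LinearPMap.mkSpanSingleton'_apply]
    calc t • dstar (gradient F x) = t * dstar (gradient F x) := by rw [smul_eq_mul]
      _ ≤ |t| * dstar (gradient F x) :=
          mul_le_mul_of_nonneg_right (le_abs_self t) (hd_nonneg _)
      _ = dstar (t • gradient F x) := (hd_smul t _).symm
  obtain ⟨g, hg1, hg2⟩ := exists_extension_of_le_sublinear
    (LinearPMap.mkSpanSingleton' (σ := RingHom.id ℝ) (gradient F x) (dstar (gradient F x)) hker) dstar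
    (fun t ht y => by rw [hd_smul, abs_of_pos ht]) hd_add hφle
  have hmemv : gradient F x ∈
      (LinearPMap.mkSpanSingleton' (σ := RingHom.id ℝ) (gradient F x) (dstar (gradient F x)) hker).domain := by
    rw [LinearPMap.domain_mkSpanSingleton]
    exact Submodule.mem_span_singleton_self _
  have hgv : g (gradient F x) = dstar (gradient F x) := by
    have h := hg1 ⟨gradient F x, hmemv⟩
    rw [h, LinearPMap.mkSpanSingleton'_apply_self]
  set w := (InnerProductSpace.toDual ℝ (EuclideanSpace ℝ (Fin n))).symm
    (LinearMap.toContinuousLinearMap g) with hwdef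
  have hwz : ∀ z, (inner ℝ w z : ℝ) = g z := by
    intro z
    rw [hwdef, InnerProductSpace.toDual_symm_apply]
    simp
  have habs : ∀ z, |(inner ℝ w z : ℝ)| ≤ dstar z := by
    intro z
    rw [abs_le]
    constructor
    · have h := hg2 (-z)
      rw [map_neg, hd_neg] at h
      rw [hwz]
      linarith
    · rw [hwz]; exact hg2 z
  -- moment chain
  have hcw : Continuous fun e : EuclideanSpace ℝ (Fin n) => (inner ℝ w e : ℝ) :=
    Continuous.inner continuous_const continuous_id
  have h2eq : ∫ e, (inner ℝ w e : ℝ) ^ 2 ∂μ = ‖w‖ ^ 2 / n := hmo2 w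
  have hjw := hjen _ (hcw.pow 2)
  have h4le : ∫ e, ((inner ℝ w e : ℝ) ^ 2) ^ 2 ∂μ ≤ ∫ e, (dstar e) ^ 4 ∂μ := by
    apply integral_mono (intg _ ((hcw.pow 2).pow 2)) (intg _ (hd_cont.pow 4))
    intro e
    have h1 := habs e
    have h2 : (inner ℝ w e : ℝ) ^ 2 ≤ (dstar e) ^ 2 := by
      have := pow_le_pow_left₀ (abs_nonneg (inner ℝ w e : ℝ)) h1 2
      rwa [sq_abs] at this
    have h3 := pow_le_pow_left₀ (sq_nonneg (inner ℝ w e : ℝ)) h2 2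
    calc ((inner ℝ w e : ℝ) ^ 2) ^ 2 ≤ ((dstar e) ^ 2) ^ 2 := h3
      _ = (dstar e) ^ 4 := by ring
  have hI4 : ∫ e, (dstar e) ^ 4 ∂μ ≤ p ^ 4 := by
    have h0 : 0 ≤ ∫ e, (dstar e) ^ 4 ∂μ := integral_nonneg fun e => by positivity
    nlinarith [hmom, Real.sq_sqrt h0, Real.sqrt_nonneg (∫ e, (dstar e) ^ 4 ∂μ), sq_nonneg p]
  have hn0 : (0:ℝ) < n := by exact_mod_cast hn
  have hwle : ‖w‖ ≤ Real.sqrt n * p := by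
    have key : (‖w‖ ^ 2 / n) ^ 2 ≤ p ^ 4 := by
      calc (‖w‖ ^ 2 / n) ^ 2 = (∫ e, (inner ℝ w e : ℝ) ^ 2 ∂μ) ^ 2 := by rw [h2eq]
        _ ≤ ∫ e, ((inner ℝ w e : ℝ) ^ 2) ^ 2 ∂μ := hjw
        _ ≤ ∫ e, (dstar e) ^ 4 ∂μ := h4le
        _ ≤ p ^ 4 := hI4
    have h1 : ‖w‖ ^ 2 / n ≤ p ^ 2 := by
      nlinarith [div_nonneg (sq_nonneg ‖w‖) hn0.le, sq_nonneg p, hp,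
        mul_pos hp hp, sq_nonneg (‖w‖ ^ 2 / n + p ^ 2)]
    have h2 : ‖w‖ ^ 2 ≤ (Real.sqrt n * p) ^ 2 := by
      have hsq : (Real.sqrt n * p) ^ 2 = n * p ^ 2 := by
        rw [mul_pow, Real.sq_sqrt hn0.le]
      rw [hsq]
      have := (div_le_iff₀ hn0).mp h1
      linarith
    calc ‖w‖ = Real.sqrt (‖w‖ ^ 2) := (Real.sqrt_sq (norm_nonneg w)).symm
      _ ≤ Real.sqrt ((Real.sqrt n * p) ^ 2) := Real.sqrt_le_sqrt h2
      _ = Real.sqrt n * p := Real.sqrt_sq (by positivity)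
  -- conclusion
  calc dstar (gradient F x) = g (gradient F x) := hgv.symm
    _ = (inner ℝ w (gradient F x) : ℝ) := (hwz _).symm
    _ ≤ |(inner ℝ w (gradient F x) : ℝ)| := le_abs_self _
    _ ≤ ‖w‖ * ‖gradient F x‖ := abs_real_inner_le_norm _ _
    _ ≤ (Real.sqrt n * p) * G :=
        mul_le_mul hwle hvG (norm_nonneg _) (by positivity)
    _ ≤ 2 * Real.sqrt n * p * G := by
        nlinarith [mul_nonneg (mul_nonneg (Real.sqrt_nonneg (n:ℝ)) hp.le) hG0]
end

section
/- Let (p_t)_{t ≥ 1} be positive reals, define P_0 = 1 and P_t = p_t (1 + p_t)^{−1} P_{t−1} for t ≥ 1 (so 0 < P_t < 1 for t ≥ 1), and set θ_t = (P_{t−1} − P_t) / ((1 − P_t) P_{t−1}). Let (u_t)_{t ≥ 1} be arbitrary vectors in ℝⁿ and define ũ_0 = u_0 ∈ ℝⁿ and ũ_t = (1 − θ_t) ũ_{t−1} + θ_t u_t for t ≥ 1. Then for every t ≥ 1: ũ_t = Σ_{i=1}^{t} [P_t / ((1 − P_t) P_i (1 + p_i))] · u_i. -/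
open Finset

/-- with `P_0 = 1`, `P_t = p_t (1+p_t)⁻¹ P_{t−1}` (`p_t > 0`, so
`0 < P_t < 1` for `t ≥ 1`), `θ_t = (P_{t−1} − P_t)/((1 − P_t) P_{t−1})`, and
`ũ_0 = u_0`, `ũ_t = (1 − θ_t) ũ_{t−1} + θ_t u_t`, one has for every `t ≥ 1`:
`ũ_t = Σ_{i=1}^{t} [P_t / ((1 − P_t) P_i (1 + p_i))] u_i`. -/
theorem tilde_u_convex_combination {n : ℕ}
    (p P θ : ℕ → ℝ)
    (hp : ∀ t ≥ 1, 0 < p t)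
    (hP0 : P 0 = 1)
    (hPrec : ∀ t ≥ 1, P t = p t * (1 + p t)⁻¹ * P (t - 1))
    (hPlt : ∀ t ≥ 1, 0 < P t ∧ P t < 1)
    (hθ : ∀ t ≥ 1, θ t = (P (t - 1) - P t) / ((1 - P t) * P (t - 1)))
    (u ut : ℕ → EuclideanSpace ℝ (Fin n))
    (hut0 : ut 0 = u 0)
    (hutrec : ∀ t ≥ 1, ut t = (1 - θ t) • ut (t - 1) + θ t • u t) :
    ∀ t ≥ 1, ut t =
      ∑ i ∈ Finset.Icc 1 t, (P t / ((1 - P t) * P i * (1 + p i))) • u i := by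
  intro t ht
  induction t, ht using Nat.le_induction with
  | base =>
      have hp1 := hp 1 le_rfl
      have h1p : (1 : ℝ) + p 1 ≠ 0 := by positivity
      obtain ⟨hP1pos, hP1lt⟩ := hPlt 1 le_rfl
      have hP1 : P 1 = p 1 * (1 + p 1)⁻¹ := by
        have := hPrec 1 le_rfl; simpa [hP0] using this
      have hθ1 : θ 1 = 1 := by
        rw [hθ 1 le_rfl]
        simp only [Nat.sub_self, hP0, mul_one]
        rw [div_self (by linarith)]
      have hc : P 1 / ((1 - P 1) * P 1 * (1 + p 1)) = 1 := by
        rw [hP1]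
        field_simp
        ring
      rw [hutrec 1 le_rfl]
      simp [hθ1, hc]
  | succ t ht ih =>
      have hrec := hutrec (t + 1) (by omega)
      simp only [Nat.add_sub_cancel] at hrec
      have hθt : θ (t + 1) = (P t - P (t + 1)) / ((1 - P (t + 1)) * P t) := by
        have := hθ (t + 1) (by omega); simpa using this
      have hPt1 : P (t + 1) = p (t + 1) * (1 + p (t + 1))⁻¹ * P t := by
        have := hPrec (t + 1) (by omega); simpa using this
      obtain ⟨hPtpos, hPtlt⟩ := hPlt t ht
      obtain ⟨hP1pos, hP1lt⟩ := hPlt (t + 1) (by omega)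
      have hpt1 := hp (t + 1) (by omega)
      have h1p : (1 : ℝ) + p (t + 1) ≠ 0 := by positivity
      have hPtne : P t ≠ 0 := ne_of_gt hPtpos
      have h1Pt : (1 : ℝ) - P t ≠ 0 := by linarith
      have h1P1 : (1 : ℝ) - P (t + 1) ≠ 0 := by linarith
      have hpt1ne : p (t + 1) ≠ 0 := ne_of_gt hpt1
      have h1θ : 1 - θ (t + 1) = P (t + 1) * (1 - P t) / ((1 - P (t + 1)) * P t) := by
        rw [hθt]
        field_simp
        ring
      have hPt' : P t = P (t + 1) * (1 + p (t + 1)) / p (t + 1) := by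
        rw [hPt1]
        field_simp
      rw [hrec, ih, Finset.sum_Icc_succ_top (by omega : 1 ≤ t + 1),
        Finset.smul_sum]
      congr 1
      · apply Finset.sum_congr rfl
        intro i hi
        rw [smul_smul]
        congr 1
        have hi1 : 1 ≤ i := (Finset.mem_Icc.mp hi).1
        have hPine : P i ≠ 0 := ne_of_gt (hPlt i hi1).1
        have hpi := hp i hi1
        have h1pi : (1 : ℝ) + p i ≠ 0 := by positivity
        rw [h1θ]
        field_simp
      · congr 1
        have hP1ne : P (t + 1) ≠ 0 := ne_of_gt hP1pos
        rw [hθt, hPt']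
        field_simp
        ring
end

section
/- Let X ⊆ ℝⁿ be a compact convex set, let ‖·‖ be a norm on ℝⁿ with dual norm ‖·‖_*, and let ν : ℝⁿ → ℝ be differentiable and 1-strongly convex w.r.t. ‖·‖ with Bregman divergence V. Let h : ℝⁿ → ℝ be convex, let F : ℝⁿ → ℝ be convex and differentiable with F(x) ≤ F(y) + ⟨∇F(y), x − y⟩ + G̃ ‖x − y‖ for all x, y ∈ X (with G̃ ≥ 0), and let β > 0. Let (p_t)_{t ≥ 1} be positive reals, P_0 = 1, P_t = p_t (1 + p_t)^{−1} P_{t−1}, θ_t = (P_{t−1} − P_t)/((1 − P_t) P_{t−1}). Fix x ∈ X and set u_0 = ũ_0 = x; for each t ≥ 1 let g_t ∈ ℝⁿ, δ_t = g_t − ∇F(u_{t−1}), let u_t be a minimizer over X of u ↦ h(u) + ⟨g_t, u⟩ + β V(x, u) + β p_t V(u_{t−1}, u), and ũ_t = (1 − θ_t) ũ_{t−1} + θ_t u_t. Define Φ(u) = h(u) + F(u) + β V(x, u). Then for every t ≥ 1 and every u ∈ X: β/(1 − P_t) · V(u_t, u) + Φ(ũ_t) − Φ(u) ≤ β P_t/(1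 − P_t) · V(u_0, u) + (P_t/(1 − P_t)) · Σ_{i=1}^{t} (1/(P_{i−1} p_i)) [ (G̃ + ‖δ_i‖_*)² / (2 β p_i) + ⟨δ_i, u − u_{i−1}⟩ ]. -/
open Set Finset
open scoped RealInnerProductSpace

/-- The Bregman divergence `V(x, y) = ν(y) − ν(x) − ⟨∇ν(x), y − x⟩` associated with a
differentiable function `ν`. -/
noncomputable def bregman {n : ℕ} (ν : EuclideanSpace ℝ (Fin n) → ℝ)
    (x y : EuclideanSpace ℝ (Fin n)) : ℝ :=
  ν y - ν x - ⟪gradient ν x, y - x⟫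

/-- The dual norm `‖y‖_* = max {⟨x, y⟩ : ‖x‖ ≤ 1}` of a norm `nrm` on `ℝⁿ`. -/
noncomputable def dualNorm {n : ℕ} (nrm : EuclideanSpace ℝ (Fin n) → ℝ)
    (y : EuclideanSpace ℝ (Fin n)) : ℝ :=
  sSup {s : ℝ | ∃ x, nrm x ≤ 1 ∧ ⟪x, y⟫ = s}

open Filter
open scoped Topology

variable {n : ℕ}

lemma slope_tendsto (f : EuclideanSpace ℝ (Fin n) → ℝ) (u d : EuclideanSpace ℝ (Fin n))
    (hf : DifferentiableAt ℝ f u) :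
    Tendsto (fun s : ℝ => (f (u + s • d) - f u) / s) (𝓝[>] 0)
      (𝓝 ⟪gradient f u, d⟫) := by
  have hg := hf.hasGradientAt
  have hfd := hg.hasFDerivAt
  have hline : HasDerivAt (fun s : ℝ => u + s • d) d 0 := by
    simpa using ((hasDerivAt_id (0:ℝ)).smul_const d).const_add u
  have hcomp : HasDerivAt (fun s : ℝ => f (u + s • d)) ⟪gradient f u, d⟫ 0 := by
    have h3 : HasFDerivAt f ((InnerProductSpace.toDual ℝ (EuclideanSpace ℝ (Fin n))) (gradient f u)) (u + (0:ℝ) • d) := by simpa using hfd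
    have := h3.comp_hasDerivAt 0 hline
    exact this
  have := hasDerivAt_iff_tendsto_slope.mp hcomp
  have h2 : Tendsto (slope (fun s : ℝ => f (u + s • d)) 0) (𝓝[>] 0) (𝓝 ⟪gradient f u, d⟫) :=
    this.mono_left (nhdsWithin_mono _ (fun s hs => ne_of_gt hs))
  refine h2.congr (fun s => ?_)
  simp [slope, vsub_eq_sub]
  ring

lemma grad_le_of_convexOn (f : EuclideanSpace ℝ (Fin n) → ℝ) (hf : ConvexOn ℝ Set.univ f)
    (a b : EuclideanSpace ℝ (Fin n)) (hd : DifferentiableAt ℝ f a) :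
    ⟪gradient f a, b - a⟫ ≤ f b - f a := by
  have ht := slope_tendsto f a (b - a) hd
  refine le_of_tendsto ht ?_
  filter_upwards [Ioc_mem_nhdsGT_of_mem (Set.left_mem_Ico.mpr one_pos)] with s hs
  have hs0 : 0 < s := hs.1
  have hcomb : a + s • (b - a) = (1 - s) • a + s • b := by
    rw [sub_smul, smul_sub, one_smul]; abel
  have h2 := hf.2 (Set.mem_univ a) (Set.mem_univ b) (by linarith [hs.2] : (0:ℝ) ≤ 1 - s)
    (le_of_lt hs0) (by ring)
  rw [div_le_iff₀ hs0]
  calc f (a + s • (b - a)) - f a ≤ (1 - s) * f a + s * f b - f a := by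
        rw [hcomb]; simp only [smul_eq_mul] at h2; linarith [h2]
    _ = (f b - f a) * s := by ring

lemma convexOn_of_grad (f : EuclideanSpace ℝ (Fin n) → ℝ)
    (hf : ∀ a b, f a + ⟪gradient f a, b - a⟫ ≤ f b) : ConvexOn ℝ Set.univ f := by
  refine ⟨convex_univ, fun p _ q _ α β hα hβ hαβ => ?_⟩
  set z := α • p + β • q with hz
  have h1 := hf z p
  have h2 := hf z q
  have hzero : α • (p - z) + β • (q - z) = 0 := by
    rw [hz]; rw [smul_sub, smul_sub]
    rw [show α • p - α • (α • p + β • q) + (β • q - β • (α • p + β • q)) =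
      α • p + β • q - (α + β) • (α • p + β • q) by rw [add_smul]; abel]
    rw [hαβ, one_smul, sub_self]
  have hinner : α * ⟪gradient f z, p - z⟫ + β * ⟪gradient f z, q - z⟫ = 0 := by
    rw [← real_inner_smul_right, ← real_inner_smul_right, ← inner_add_right, hzero,
      inner_zero_right]
  simp only [smul_eq_mul]
  have e1 := mul_le_mul_of_nonneg_left h1 hα
  have e2 := mul_le_mul_of_nonneg_left h2 hβ
  rw [mul_add] at e1 e2
  have hsum : α * f z + β * f z = f z := by rw [← add_mul, hαβ, one_mul]
  linarith [e1, e2, hinner, hsum]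

lemma convexOn_bregman (ν : EuclideanSpace ℝ (Fin n) → ℝ)
    (hconv : ConvexOn ℝ Set.univ ν) (x : EuclideanSpace ℝ (Fin n)) :
    ConvexOn ℝ Set.univ (fun y => bregman ν x y) := by
  refine ⟨convex_univ, fun p _ q _ α β hα hβ hαβ => ?_⟩
  have h1 := hconv.2 (Set.mem_univ p) (Set.mem_univ q) hα hβ hαβ
  have hlin : ⟪gradient ν x, (α • p + β • q) - x⟫
      = α * ⟪gradient ν x, p - x⟫ + β * ⟪gradient ν x, q - x⟫ := by
    have : (α • p + β • q) - x = α • (p - x) + β • (q - x) := by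
      have hx : α • x + β • x = x := by rw [← add_smul, hαβ, one_smul]
      rw [smul_sub, smul_sub,
        show α • p - α • x + (β • q - β • x) = α • p + β • q - (α • x + β • x) from by abel,
        hx]
    rw [this, inner_add_right, real_inner_smul_right, real_inner_smul_right]
  simp only [bregman, smul_eq_mul]
  rw [hlin]
  simp only [smul_eq_mul] at h1 ⊢
  have hsum : α * ν x + β * ν x = ν x := by rw [← add_mul, hαβ, one_mul]
  linarith [h1, hsum]

section NormFacts
variable (nrm : EuclideanSpace ℝ (Fin n) → ℝ)
variable (hn_add : ∀ x y, nrm (x + y) ≤ nrm x + nrm y)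
variable (hn_smul : ∀ (c : ℝ) x, nrm (c • x) = |c| * nrm x)

include hn_smul in
lemma nrm_zero : nrm 0 = 0 := by
  have := hn_smul 0 0; simpa using this

include hn_smul in
lemma nrm_neg (x : EuclideanSpace ℝ (Fin n)) : nrm (-x) = nrm x := by
  have := hn_smul (-1) x; simpa using this

include hn_add hn_smul in
lemma nrm_nonneg (x : EuclideanSpace ℝ (Fin n)) : 0 ≤ nrm x := by
  have h1 := hn_add x (-x)
  rw [add_neg_cancel, nrm_zero nrm hn_smul, nrm_neg nrm hn_smul] at h1
  linarith

include hn_add hn_smul in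
lemma nrm_sum {ι : Type*} (s : Finset ι) (f : ι → EuclideanSpace ℝ (Fin n)) :
    nrm (∑ i ∈ s, f i) ≤ ∑ i ∈ s, nrm (f i) := by
  classical
  induction s using Finset.cons_induction with
  | empty => simp [nrm_zero nrm hn_smul]
  | cons a s ha ih =>
    rw [Finset.sum_cons, Finset.sum_cons]
    exact le_trans (hn_add _ _) (add_le_add le_rfl ih)

include hn_add hn_smul in
lemma nrm_upper : ∃ C : ℝ, ∀ x, nrm x ≤ C * ‖x‖ := by
  classical
  refine ⟨∑ i : Fin n, nrm (EuclideanSpace.single i 1), fun x => ?_⟩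
  have hx : x = ∑ i : Fin n, x i • EuclideanSpace.single i (1:ℝ) := by
    have := (EuclideanSpace.basisFun (Fin n) ℝ).sum_repr x
    simp only [EuclideanSpace.basisFun_repr, EuclideanSpace.basisFun_apply] at this
    exact this.symm
  calc nrm x = nrm (∑ i : Fin n, x i • EuclideanSpace.single i (1:ℝ)) := by rw [← hx]
    _ ≤ ∑ i : Fin n, nrm (x i • EuclideanSpace.single i (1:ℝ)) :=
        nrm_sum nrm hn_add hn_smul _ _
    _ ≤ ∑ i : Fin n, nrm (EuclideanSpace.single i (1:ℝ)) * ‖x‖ := by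
        refine Finset.sum_le_sum fun i _ => ?_
        rw [hn_smul]
        have habs : |x i| ≤ ‖x‖ := by
          have h1 : ⟪EuclideanSpace.single i (1:ℝ), x⟫ = x i := by
            simp [EuclideanSpace.inner_single_left]
          have h2 := abs_real_inner_le_norm (EuclideanSpace.single i (1:ℝ)) x
          rw [h1, EuclideanSpace.norm_single] at h2
          simpa using h2
        have := nrm_nonneg nrm hn_add hn_smul (EuclideanSpace.single i (1:ℝ))
        calc |x i| * nrm (EuclideanSpace.single i (1:ℝ))
            ≤ ‖x‖ * nrm (EuclideanSpace.single i (1:ℝ)) := by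
              exact mul_le_mul_of_nonneg_right habs this
          _ = nrm (EuclideanSpace.single i (1:ℝ)) * ‖x‖ := mul_comm _ _
    _ = (∑ i : Fin n, nrm (EuclideanSpace.single i (1:ℝ))) * ‖x‖ := by
        rw [Finset.sum_mul]

include hn_add hn_smul in
lemma nrm_lipschitz (x y : EuclideanSpace ℝ (Fin n)) :
    |nrm x - nrm y| ≤ nrm (x - y) := by
  rw [abs_sub_le_iff]
  constructor
  · have := hn_add y (x - y)
    rw [add_sub_cancel] at this
    linarith
  · have := hn_add x (y - x)
    rw [add_sub_cancel] at this
    have hneg : nrm (y - x) = nrm (x - y) := by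
      rw [← nrm_neg nrm hn_smul (y - x), neg_sub]
    linarith [hneg ▸ this]

include hn_add hn_smul in
lemma nrm_continuous : Continuous nrm := by
  obtain ⟨C, hC⟩ := nrm_upper nrm hn_add hn_smul
  rw [Metric.continuous_iff]
  intro a ε hε
  refine ⟨ε / (|C| + 1), by positivity, fun x hx => ?_⟩
  rw [Real.dist_eq]
  have h1 := nrm_lipschitz nrm hn_add hn_smul x a
  have h2 := hC (x - a)
  have h3 : dist x a = ‖x - a‖ := dist_eq_norm x a
  have h4 : ‖x - a‖ ≥ 0 := norm_nonneg _
  have h5 : C * ‖x - a‖ ≤ |C| * ‖x - a‖ :=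
    mul_le_mul_of_nonneg_right (le_abs_self C) h4
  have h6 : ‖x - a‖ < ε / (|C| + 1) := by rwa [h3] at hx
  have h7 : (0:ℝ) < |C| + 1 := by positivity
  calc |nrm x - nrm a| ≤ |C| * ‖x - a‖ := by linarith
    _ < |C| * (ε / (|C| + 1)) + ε / (|C| + 1) := by
        nlinarith [abs_nonneg C, div_pos hε h7]
    _ = ε := by field_simp
end NormFacts

section DualFacts
variable (nrm : EuclideanSpace ℝ (Fin n) → ℝ)
variable (hn_add : ∀ x y, nrm (x + y) ≤ nrm x + nrm y)
variable (hn_smul : ∀ (c : ℝ) x, nrm (c • x) = |c| * nrm x)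
variable (hn_def : ∀ x, nrm x = 0 → x = 0)

include hn_add hn_smul hn_def in
lemma nrm_lower : ∃ c : ℝ, 0 < c ∧ ∀ x, c * ‖x‖ ≤ nrm x := by
  rcases subsingleton_or_nontrivial (EuclideanSpace ℝ (Fin n)) with hs | hnt
  · refine ⟨1, one_pos, fun x => ?_⟩
    have hx0 : x = (0 : EuclideanSpace ℝ (Fin n)) := Subsingleton.elim _ _
    simp [hx0, nrm_zero nrm hn_smul]
  · have hsne : (Metric.sphere (0 : EuclideanSpace ℝ (Fin n)) 1).Nonempty :=
      NormedSpace.sphere_nonempty.mpr zero_le_one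
    obtain ⟨y, hy, hmin⟩ := (isCompact_sphere (0 : EuclideanSpace ℝ (Fin n)) 1).exists_isMinOn
      hsne ((nrm_continuous nrm hn_add hn_smul).continuousOn)
    have hy1 : ‖y‖ = 1 := mem_sphere_zero_iff_norm.mp hy
    have hc0 : 0 < nrm y := by
      rcases lt_or_eq_of_le (nrm_nonneg nrm hn_add hn_smul y) with h | h
      · exact h
      · exfalso
        have : y = 0 := hn_def y h.symm
        rw [this, norm_zero] at hy1; norm_num at hy1
    refine ⟨nrm y, hc0, fun x => ?_⟩
    by_cases hx : x = 0
    · simp [hx, nrm_zero nrm hn_smul]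
    · have hxn : (0:ℝ) < ‖x‖ := norm_pos_iff.mpr hx
      have hz : ‖x‖⁻¹ • x ∈ Metric.sphere (0 : EuclideanSpace ℝ (Fin n)) 1 := by
        simp [norm_smul, abs_of_pos (inv_pos.mpr hxn), inv_mul_cancel₀ (ne_of_gt hxn)]
      have h1 : nrm y ≤ nrm (‖x‖⁻¹ • x) := hmin hz
      rw [hn_smul, abs_of_pos (inv_pos.mpr hxn)] at h1
      have := mul_le_mul_of_nonneg_left h1 (le_of_lt hxn)
      rw [← mul_assoc, mul_inv_cancel₀ (ne_of_gt hxn), one_mul] at this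
      linarith [mul_comm (nrm y) ‖x‖ ▸ this]

include hn_add hn_smul hn_def in
lemma dual_bddAbove (δ : EuclideanSpace ℝ (Fin n)) :
    BddAbove {s : ℝ | ∃ x, nrm x ≤ 1 ∧ ⟪x, δ⟫ = s} := by
  obtain ⟨c, hc, hlow⟩ := nrm_lower nrm hn_add hn_smul hn_def
  refine ⟨c⁻¹ * ‖δ‖, fun s hs => ?_⟩
  obtain ⟨x, hx1, hxs⟩ := hs
  have h1 : ‖x‖ ≤ c⁻¹ := by
    have := hlow x
    calc ‖x‖ ≤ c⁻¹ * nrm x := by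
          rw [← mul_le_mul_iff_right₀ hc, ← mul_assoc, mul_inv_cancel₀ (ne_of_gt hc), one_mul]
          exact this
      _ ≤ c⁻¹ * 1 := mul_le_mul_of_nonneg_left hx1 (le_of_lt (inv_pos.mpr hc))
      _ = c⁻¹ := mul_one _
  calc s = ⟪x, δ⟫ := hxs.symm
    _ ≤ ‖x‖ * ‖δ‖ := real_inner_le_norm x δ
    _ ≤ c⁻¹ * ‖δ‖ := mul_le_mul_of_nonneg_right h1 (norm_nonneg δ)

include hn_smul in
lemma dual_zero_mem (δ : EuclideanSpace ℝ (Fin n)) :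
    (0:ℝ) ∈ {s : ℝ | ∃ x, nrm x ≤ 1 ∧ ⟪x, δ⟫ = s} :=
  ⟨0, by rw [nrm_zero nrm hn_smul]; norm_num, inner_zero_left δ⟩

include hn_add hn_smul hn_def in
lemma dual_nonneg (δ : EuclideanSpace ℝ (Fin n)) : 0 ≤ dualNorm nrm δ :=
  le_csSup (dual_bddAbove nrm hn_add hn_smul hn_def δ) (dual_zero_mem nrm hn_smul δ)

include hn_add hn_smul hn_def in
lemma dual_ineq (δ v : EuclideanSpace ℝ (Fin n)) :
    ⟪v, δ⟫ ≤ dualNorm nrm δ * nrm v := by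
  by_cases hv : nrm v = 0
  · have hv0 : v = 0 := hn_def v hv
    rw [hv0, inner_zero_left, ← hv0, hv, mul_zero]
  · have hpos : 0 < nrm v := lt_of_le_of_ne (nrm_nonneg nrm hn_add hn_smul v) (Ne.symm hv)
    have hmem : ⟪(nrm v)⁻¹ • v, δ⟫ ∈ {s : ℝ | ∃ x, nrm x ≤ 1 ∧ ⟪x, δ⟫ = s} := by
      refine ⟨(nrm v)⁻¹ • v, ?_, rfl⟩
      rw [hn_smul, abs_of_pos (inv_pos.mpr hpos), inv_mul_cancel₀ hv]
    have h1 := le_csSup (dual_bddAbove nrm hn_add hn_smul hn_def δ) hmem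
    rw [real_inner_smul_left] at h1
    have h2 := mul_le_mul_of_nonneg_left h1 (le_of_lt hpos)
    rw [← mul_assoc, mul_inv_cancel₀ hv, one_mul] at h2
    calc ⟪v, δ⟫ ≤ nrm v * dualNorm nrm δ := h2
      _ = dualNorm nrm δ * nrm v := mul_comm _ _
end DualFacts

lemma convexOn_inner_const (m : EuclideanSpace ℝ (Fin n)) (K : ℝ) :
    ConvexOn ℝ Set.univ (fun v => ⟪m, v⟫ + K) := by
  refine ⟨convex_univ, fun p _ q _ α β hα hβ hαβ => ?_⟩
  simp only [smul_eq_mul, inner_add_right, real_inner_smul_right]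
  have hK : α * K + β * K = K := by rw [← add_mul, hαβ, one_mul]
  linarith [hK]

lemma prox_lemma (X : Set (EuclideanSpace ℝ (Fin n))) (hX_conv : Convex ℝ X)
    (G ν : EuclideanSpace ℝ (Fin n) → ℝ) (hG : ConvexOn ℝ Set.univ G)
    (hν : Differentiable ℝ ν) (c : ℝ) (hc : 0 ≤ c)
    (u : EuclideanSpace ℝ (Fin n)) (hu : u ∈ X)
    (hmin : IsMinOn (fun v => G v + c * ν v) X u)
    (w : EuclideanSpace ℝ (Fin n)) (hw : w ∈ X) :
    G u + c * ν u + c * bregman ν u w ≤ G w + c * ν w := by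
  set g := gradient ν u with hg
  have hlim : Tendsto (fun s : ℝ => -(c * bregman ν u (u + s • (w - u))) / s)
      (𝓝[>] 0) (𝓝 0) := by
    have ht := slope_tendsto ν u (w - u) (hν u)
    have h2 : Tendsto (fun s : ℝ =>
        -c * ((ν (u + s • (w - u)) - ν u) / s - ⟪g, w - u⟫)) (𝓝[>] 0) (𝓝 0) := by
      have := (ht.sub_const ⟪g, w - u⟫).const_mul (-c)
      rw [← hg] at this
      simpa using this
    refine h2.congr' ?_
    filter_upwards [self_mem_nhdsWithin] with s hs
    have hs0 : s ≠ 0 := ne_of_gt hs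
    simp only [bregman, add_sub_cancel_left, real_inner_smul_right, ← hg]
    field_simp
  have key : (0:ℝ) ≤ G w - G u + c * ⟪g, w - u⟫ := by
    refine le_of_tendsto hlim ?_
    filter_upwards [Ioc_mem_nhdsGT_of_mem (Set.left_mem_Ico.mpr one_pos)] with s hs
    have hs0 : 0 < s := hs.1
    have hvmem : u + s • (w - u) ∈ X :=
      hX_conv.add_smul_sub_mem hu hw ⟨le_of_lt hs0, hs.2⟩
    have hfmin : G u + c * ν u ≤ G (u + s • (w - u)) + c * ν (u + s • (w - u)) := hmin hvmem
    have hcomb : u + s • (w - u) = (1 - s) • u + s • w := by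
      rw [sub_smul, smul_sub, one_smul]; abel
    have hGconv : G (u + s • (w - u)) ≤ (1 - s) * G u + s * G w := by
      rw [hcomb]
      have := hG.2 (Set.mem_univ u) (Set.mem_univ w) (by linarith [hs.2] : (0:ℝ) ≤ 1 - s)
        (le_of_lt hs0) (by ring)
      simpa using this
    have hbreg : bregman ν u (u + s • (w - u))
        = ν (u + s • (w - u)) - ν u - s * ⟪g, w - u⟫ := by
      simp only [bregman, add_sub_cancel_left, real_inner_smul_right, ← hg]
    rw [div_le_iff₀ hs0, hbreg]
    nlinarith [hfmin, hGconv]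
  simp only [bregman, ← hg]
  nlinarith [key]

lemma prox_step (X : Set (EuclideanSpace ℝ (Fin n))) (hX_conv : Convex ℝ X)
    (ν : EuclideanSpace ℝ (Fin n) → ℝ) (hν : Differentiable ℝ ν)
    (h : EuclideanSpace ℝ (Fin n) → ℝ) (hh_conv : ConvexOn ℝ Set.univ h)
    (β p : ℝ) (hβ : 0 < β) (hp : 0 < p)
    (gt x0 a b w : EuclideanSpace ℝ (Fin n)) (hb : b ∈ X) (hw : w ∈ X)
    (hmin : IsMinOn (fun v => h v + ⟪gt, v⟫ +
      β * bregman ν x0 v + β * p * bregman ν a v) X b) :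
    h b + ⟪gt, b⟫ + β * bregman ν x0 b + β * p * bregman ν a b
      + β * (1 + p) * bregman ν b w
      ≤ h w + ⟪gt, w⟫ + β * bregman ν x0 w + β * p * bregman ν a w := by
  set m : EuclideanSpace ℝ (Fin n) := gt - β • gradient ν x0 - (β * p) • gradient ν a with hm
  set K : ℝ := β * (⟪gradient ν x0, x0⟫ - ν x0) + β * p * (⟪gradient ν a, a⟫ - ν a) with hK
  set G : EuclideanSpace ℝ (Fin n) → ℝ := fun v => h v + (⟪m, v⟫ + K) with hG
  set c : ℝ := β * (1 + p) with hc
  have heq : ∀ v, h v + ⟪gt, v⟫ + β * bregman ν x0 v + β * p * bregman ν a v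
      = G v + c * ν v := by
    intro v
    simp only [hG, hm, hK, hc, bregman, inner_sub_left, inner_sub_right,
      real_inner_smul_left]
    ring
  have hGconv : ConvexOn ℝ Set.univ G :=
    hh_conv.add (convexOn_inner_const m K)
  have hmin' : IsMinOn (fun v => G v + c * ν v) X b := by
    have : (fun v => h v + ⟪gt, v⟫ + β * bregman ν x0 v + β * p * bregman ν a v)
        = fun v => G v + c * ν v := funext heq
    rwa [this] at hmin
  have hc0 : 0 ≤ c := by positivity
  have := prox_lemma X hX_conv G ν hGconv hν c hc0 b hb hmin' w hw
  have e1 := heq b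
  have e2 := heq w
  linarith [this, e1, e2]

lemma arith_step (β q Q R θ' A A' V V' V0 B S Φw : ℝ)
    (hβ : 0 < β) (hq : 0 < q) (hQ : 0 < Q) (hR : 0 < R) (hR1 : R < 1)
    (hrec : q * Q = R * (1 + q))
    (hθv : θ' = (Q - R) / ((1 - R) * Q))
    (hstep : A' + θ' * (β * (1 + q)) * V' ≤
      (1 - θ') * A + θ' * Φw + θ' * (β * q * V + B))
    (hIH : (1 - Q) / Q * (A - Φw) + β / Q * V ≤ V0 + S) :
    (1 - R) / R * (A' - Φw) + β / R * V' ≤ V0 + S + 1 / (Q * q) * B := by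
  have h1R : (0:ℝ) < 1 - R := by linarith
  have h1q : (0:ℝ) < 1 + q := by linarith
  have hQ0 : Q ≠ 0 := ne_of_gt hQ
  have hR0 : R ≠ 0 := ne_of_gt hR
  have h1R0 : (1:ℝ) - R ≠ 0 := ne_of_gt h1R
  have h1q0 : (1:ℝ) + q ≠ 0 := ne_of_gt h1q
  have hθ3 : θ' * ((1 - R) * (1 + q)) = 1 := by
    rw [hθv]
    field_simp
    linear_combination hrec
  have hc1 : (0:ℝ) ≤ (1 - R) * (1 + q) := by positivity
  have e1 := mul_le_mul_of_nonneg_left hstep hc1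
  have m1 : (1-R)*(1+q) * (θ' * (β * (1 + q)) * V') = β * (1+q) * V' := by
    linear_combination (β * (1 + q) * V') * hθ3
  have m2 : (1-R)*(1+q) * ((1 - θ') * A) = ((1-R)*(1+q) - 1) * A := by
    linear_combination (-A) * hθ3
  have m3 : (1-R)*(1+q) * (θ' * Φw) = Φw := by linear_combination Φw * hθ3
  have m4 : (1-R)*(1+q) * (θ' * (β * q * V + B)) = β * q * V + B := by
    linear_combination (β * q * V + B) * hθ3
  have stepPoly : (1-R)*(1+q)*A' + β*(1+q)*V'
      ≤ ((1-R)*(1+q) - 1)*A + Φw + β*q*V + B := by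
    linarith [e1, m1, m2, m3, m4]
  have e2 := mul_le_mul_of_nonneg_left hIH (le_of_lt hQ)
  have m5 : Q * ((1 - Q)/Q * (A - Φw)) = (1-Q)*(A - Φw) := by field_simp
  have m6 : Q * (β/Q * V) = β * V := by field_simp
  have ihPoly : (1-Q)*(A - Φw) + β*V ≤ Q*(V0 + S) := by linarith [e2, m5, m6]
  have e3 := mul_le_mul_of_nonneg_left ihPoly (le_of_lt hq)
  have g1 : ((1-R)*(1+q) - 1) * A = q*(1-Q)*A := by linear_combination A * hrec
  have g2 : q*(1-Q)*Φw + Φw = (1-R)*(1+q)*Φw := by linear_combination (-Φw) * hrec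
  have g3 : q*(Q*(V0+S)) = (1+q)*R*(V0+S) := by linear_combination (V0+S)*hrec
  have goalPoly : (1+q)*((1-R)*(A' - Φw)) + (1+q)*β*V' ≤ (1+q)*R*(V0+S) + B := by
    linarith [stepPoly, e3, g1, g2, g3]
  have hRq : (0:ℝ) ≤ 1/(R*(1+q)) := by positivity
  have e4 := mul_le_mul_of_nonneg_left goalPoly hRq
  have m7 : 1/(R*(1+q)) * ((1+q)*((1-R)*(A' - Φw))) = (1-R)/R*(A' - Φw) := by
    field_simp
  have m8 : 1/(R*(1+q)) * ((1+q)*β*V') = β/R*V' := by field_simp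
  have m9 : 1/(R*(1+q)) * ((1+q)*R*(V0+S)) = V0 + S := by field_simp
  have m10 : 1/(R*(1+q)) * B = 1/(Q*q)*B := by
    rw [show R*(1+q) = Q*q from by linarith [hrec]]
  linarith [e4, m7, m8, m9, m10]


set_option maxHeartbeats 1000000 in
/-- analysis of the prox-sliding procedure `PS`. -/
theorem prox_sliding_inner_bound {n : ℕ}
    (X : Set (EuclideanSpace ℝ (Fin n))) (hX_comp : IsCompact X) (hX_conv : Convex ℝ X)
    -- `nrm` is a norm `‖·‖` on `ℝⁿ`
    (nrm : EuclideanSpace ℝ (Fin n) → ℝ)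
    (hn_add : ∀ x y, nrm (x + y) ≤ nrm x + nrm y)
    (hn_smul : ∀ (c : ℝ) x, nrm (c • x) = |c| * nrm x)
    (hn_def : ∀ x, nrm x = 0 → x = 0)
    -- `ν` is differentiable and 1-strongly convex w.r.t. `nrm`, `V = bregman ν`
    (ν : EuclideanSpace ℝ (Fin n) → ℝ) (hν_diff : Differentiable ℝ ν)
    (hν_strong : ∀ x y, (1 / 2) * (nrm (x - y)) ^ 2 ≤ bregman ν x y)
    -- `h` is convex
    (h : EuclideanSpace ℝ (Fin n) → ℝ) (hh_conv : ConvexOn ℝ Set.univ h)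
    -- `F` is convex, differentiable, with "2G̃-type" smoothness bound on `X`
    (F : EuclideanSpace ℝ (Fin n) → ℝ) (hF_conv : ConvexOn ℝ Set.univ F)
    (hF_diff : Differentiable ℝ F)
    (Gt : ℝ) (hGt : 0 ≤ Gt)
    (hF_bound : ∀ x ∈ X, ∀ y ∈ X,
      F x ≤ F y + ⟪gradient F y, x - y⟫ + Gt * nrm (x - y))
    (β : ℝ) (hβ : 0 < β)
    -- the sequences `p_t`, `P_t`, `θ_t`
    (p P θ : ℕ → ℝ)
    (hp : ∀ t ≥ 1, 0 < p t)
    (hP0 : P 0 = 1)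
    (hPrec : ∀ t ≥ 1, P t = p t * (1 + p t)⁻¹ * P (t - 1))
    (hθ : ∀ t ≥ 1, θ t = (P (t - 1) - P t) / ((1 - P t) * P (t - 1)))
    -- the iterates of the `PS` procedure started from `x ∈ X`
    (x : EuclideanSpace ℝ (Fin n)) (hx : x ∈ X)
    (u ut gvec δ : ℕ → EuclideanSpace ℝ (Fin n))
    (hu0 : u 0 = x) (hut0 : ut 0 = x)
    (hδ : ∀ t ≥ 1, δ t = gvec t - gradient F (u (t - 1)))
    (humem : ∀ t ≥ 1, u t ∈ X)
    (humin : ∀ t ≥ 1, IsMinOn (fun v => h v + ⟪gvec t, v⟫ +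
      β * bregman ν x v + β * p t * bregman ν (u (t - 1)) v) X (u t))
    (hutrec : ∀ t ≥ 1, ut t = (1 - θ t) • ut (t - 1) + θ t • u t) :
    -- conclusion
    ∀ t ≥ 1, ∀ w ∈ X,
      β / (1 - P t) * bregman ν (u t) w +
          ((h (ut t) + F (ut t) + β * bregman ν x (ut t)) -
            (h w + F w + β * bregman ν x w)) ≤
        β * P t / (1 - P t) * bregman ν (u 0) w +
          P t / (1 - P t) *
            ∑ i ∈ Finset.Icc 1 t, (1 / (P (i - 1) * p i)) *
              ((Gt + dualNorm nrm (δ i)) ^ 2 / (2 * β * p i) +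
                ⟪δ i, w - u (i - 1)⟫) := by
  -- basic facts about P
  have hPfacts : ∀ t : ℕ, 0 < P t ∧ P t ≤ 1 := by
    intro t
    induction t with
    | zero => rw [hP0]; exact ⟨one_pos, le_refl 1⟩
    | succ k ih =>
      have hpk := hp (k+1) (by omega)
      have hrec := hPrec (k+1) (by omega)
      simp only [Nat.add_sub_cancel] at hrec
      have h1p : (0:ℝ) < 1 + p (k+1) := by linarith
      have hq1 : p (k+1) * (1 + p (k+1))⁻¹ < 1 := by
        rw [← div_eq_mul_inv, div_lt_one h1p]; linarith
      have hq0 : (0:ℝ) < p (k+1) * (1 + p (k+1))⁻¹ := by positivity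
      constructor
      · rw [hrec]; exact mul_pos hq0 ih.1
      · rw [hrec]; nlinarith [ih.1, ih.2, hq0, hq1]
  have hPlt1 : ∀ t : ℕ, 1 ≤ t → P t < 1 := by
    intro t ht
    have hpk := hp t ht
    have hrec := hPrec t ht
    have h1p : (0:ℝ) < 1 + p t := by linarith
    have hq1 : p t * (1 + p t)⁻¹ < 1 := by
      rw [← div_eq_mul_inv, div_lt_one h1p]; linarith
    have hq0 : (0:ℝ) < p t * (1 + p t)⁻¹ := by positivity
    have hQ := (hPfacts (t-1)).1
    have hQ1 := (hPfacts (t-1)).2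
    rw [hrec]; nlinarith [hQ, hQ1, hq0, hq1]
  have hPrec' : ∀ t : ℕ, 1 ≤ t → p t * P (t-1) = P t * (1 + p t) := by
    intro t ht
    have hpk := hp t ht
    have h1p : (0:ℝ) < 1 + p t := by linarith
    have hrec := hPrec t ht
    rw [hrec]; field_simp
  have hθb : ∀ t : ℕ, 1 ≤ t → 0 < θ t ∧ θ t ≤ 1 := by
    intro t ht
    have hpk := hp t ht
    have hrec := hPrec t ht
    have h1p : (0:ℝ) < 1 + p t := by linarith
    have hQ := (hPfacts (t-1)).1
    have hQ1 := (hPfacts (t-1)).2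
    have hR := (hPfacts t).1
    have hR1 := hPlt1 t ht
    have hq1 : p t * (1 + p t)⁻¹ < 1 := by
      rw [← div_eq_mul_inv, div_lt_one h1p]; linarith
    have hQR : P t < P (t-1) := by rw [hrec]; nlinarith [hQ, hq1]
    have hden : (0:ℝ) < (1 - P t) * P (t-1) := by nlinarith
    constructor
    · rw [hθ t ht]; exact div_pos (by linarith) hden
    · rw [hθ t ht, div_le_one hden]; nlinarith [hR, hQ1]
  -- bregman facts
  have hbreg_nonneg : ∀ a b, 0 ≤ bregman ν a b := by
    intro a b
    have := hν_strong a b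
    nlinarith [sq_nonneg (nrm (a - b))]
  have hν_conv : ConvexOn ℝ Set.univ ν := by
    apply convexOn_of_grad
    intro a b
    have := hbreg_nonneg a b
    simp only [bregman] at this
    linarith
  have hVconv : ConvexOn ℝ Set.univ (fun v => bregman ν x v) := convexOn_bregman ν hν_conv x
  have hFgrad : ∀ a b, ⟪gradient F a, b - a⟫ ≤ F b - F a := fun a b =>
    grad_le_of_convexOn F hF_conv a b (hF_diff a)
  -- membership facts
  have hu_mem : ∀ t : ℕ, u t ∈ X := by
    intro t
    rcases Nat.eq_zero_or_pos t with h0 | hpos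
    · rw [h0, hu0]; exact hx
    · exact humem t hpos
  have hut_mem : ∀ t : ℕ, ut t ∈ X := by
    intro t
    induction t with
    | zero => rw [hut0]; exact hx
    | succ k ih =>
      have hrec := hutrec (k+1) (by omega)
      simp only [Nat.add_sub_cancel] at hrec
      obtain ⟨hθ0, hθ1⟩ := hθb (k+1) (by omega)
      rw [hrec]
      exact hX_conv ih (hu_mem (k+1)) (by linarith) (le_of_lt hθ0) (by ring)
  -- the per-step inequality
  have hstep : ∀ t : ℕ, 1 ≤ t → ∀ w ∈ X,
      (h (ut t) + F (ut t) + β * bregman ν x (ut t))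
        + θ t * (β * (1 + p t)) * bregman ν (u t) w
      ≤ (1 - θ t) * (h (ut (t-1)) + F (ut (t-1)) + β * bregman ν x (ut (t-1)))
        + θ t * (h w + F w + β * bregman ν x w)
        + θ t * (β * p t * bregman ν (u (t-1)) w +
            ((Gt + dualNorm nrm (δ t)) ^ 2 / (2 * β * p t) + ⟪δ t, w - u (t-1)⟫)) := by
    intro t ht w hw
    obtain ⟨hθ0, hθ1⟩ := hθb t ht
    have hpt := hp t ht
    have hb : u t ∈ X := hu_mem t
    have ha : u (t-1) ∈ X := hu_mem (t-1)
    set a := u (t-1)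
    set b := u t
    set s := dualNorm nrm (δ t) with hs
    set r := nrm (b - a) with hr
    -- convexity of combination
    have hcc := hutrec t ht
    have hconv3 : ∀ φ : EuclideanSpace ℝ (Fin n) → ℝ, ConvexOn ℝ Set.univ φ →
        φ (ut t) ≤ (1 - θ t) * φ (ut (t-1)) + θ t * φ b := by
      intro φ hφ
      rw [hcc]
      have := hφ.2 (Set.mem_univ (ut (t-1))) (Set.mem_univ b)
        (by linarith : (0:ℝ) ≤ 1 - θ t) (le_of_lt hθ0) (by ring)
      simpa using this
    have hh2 := hconv3 h hh_conv
    have hF2 := hconv3 F hF_conv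
    have hV2 := hconv3 (fun v => bregman ν x v) hVconv
    have hV2' := mul_le_mul_of_nonneg_left hV2 (le_of_lt hβ)
    -- prox inequality
    have F1 := prox_step X hX_conv ν hν_diff h hh_conv β (p t) hβ hpt
      (gvec t) x a b w hb hw (humin t ht)
    -- smoothness-type bounds
    have F5 := hF_bound b hb a ha
    have F6 : ⟪gradient F a, w - a⟫ ≤ F w - F a := hFgrad a w
    -- dual norm bound
    have hd1 := dual_ineq nrm hn_add hn_smul hn_def (δ t) (a - b)
    have hnab : nrm (a - b) = r := by
      rw [hr, ← nrm_neg nrm hn_smul (b - a), neg_sub]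
    have F7 : ⟪δ t, a - b⟫ ≤ s * r := by
      rw [real_inner_comm]; rw [hnab] at hd1; exact hd1
    -- strong convexity
    have F8 : (1/2) * r^2 ≤ bregman ν a b := by
      have := hν_strong a b
      rwa [hnab] at this
    have F8' := mul_le_mul_of_nonneg_left F8 (by positivity : (0:ℝ) ≤ β * p t)
    -- Young's inequality
    have F9 : (Gt + s) * r ≤ β * p t * ((1/2) * r^2) + (Gt + s)^2 / (2 * β * p t) := by
      have hbp : (0:ℝ) < 2 * β * p t := by positivity
      have h9 : (Gt + s) * r - β * p t * ((1/2) * r^2) ≤ (Gt + s)^2 / (2 * β * p t) := by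
        rw [le_div_iff₀ hbp]
        nlinarith [sq_nonneg (Gt + s - β * p t * r)]
      linarith
    -- gradient decomposition
    have hgv : gvec t = gradient F a + δ t := by
      have hδt := hδ t ht
      rw [hδt]; abel
    have eg : ∀ v, ⟪gvec t, v⟫ = ⟪gradient F a, v⟫ + ⟪δ t, v⟫ := by
      intro v; rw [hgv, inner_add_left]
    have e3 : ⟪gradient F a, b - a⟫ = ⟪gradient F a, b⟫ - ⟪gradient F a, a⟫ :=
      inner_sub_right _ _ _
    have e4 : ⟪gradient F a, w - a⟫ = ⟪gradient F a, w⟫ - ⟪gradient F a, a⟫ :=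
      inner_sub_right _ _ _
    have e5 : ⟪δ t, w - a⟫ = ⟪δ t, w⟫ - ⟪δ t, a⟫ := inner_sub_right _ _ _
    have e6 : ⟪δ t, a - b⟫ = ⟪δ t, a⟫ - ⟪δ t, b⟫ := inner_sub_right _ _ _
    have hbracket : h b + β * bregman ν x b + F b
        ≤ h w + F w + β * bregman ν x w + β * p t * bregman ν a w
          - β * (1 + p t) * bregman ν b w + ⟪δ t, w - a⟫ + (Gt + s)^2 / (2 * β * p t) := by
      linarith [F1, F5, F6, F7, F8', F9, eg b, eg w, e3, e4, e5, e6]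
    have hbθ := mul_le_mul_of_nonneg_left hbracket (le_of_lt hθ0)
    linarith [hh2, hF2, hV2', hbθ]
  -- the summed inequality (in `A` form)
  intro t ht w hw
  have haux : ∀ t : ℕ,
      (1 - P t)/(P t) * ((h (ut t) + F (ut t) + β * bregman ν x (ut t)) -
          (h w + F w + β * bregman ν x w))
        + β / P t * bregman ν (u t) w
      ≤ β * bregman ν (u 0) w +
          ∑ i ∈ Finset.Icc 1 t, (1 / (P (i - 1) * p i)) *
            ((Gt + dualNorm nrm (δ i)) ^ 2 / (2 * β * p i) + ⟪δ i, w - u (i - 1)⟫) := by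
    intro k
    induction k with
    | zero =>
      rw [hP0]
      rw [show Finset.Icc 1 0 = ∅ from rfl]
      simp
    | succ k ih =>
      have hq := hp (k+1) (by omega)
      have hQ := (hPfacts k).1
      have hR := (hPfacts (k+1)).1
      have hR1 := hPlt1 (k+1) (by omega)
      have hrec := hPrec' (k+1) (by omega)
      simp only [Nat.add_sub_cancel] at hrec
      have hθv := hθ (k+1) (by omega)
      simp only [Nat.add_sub_cancel] at hθv
      have hstep' := hstep (k+1) (by omega) w hw
      simp only [Nat.add_sub_cancel] at hstep'
      rw [Finset.sum_Icc_succ_top (by omega : 1 ≤ k + 1)]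
      simp only [Nat.add_sub_cancel]
      have := arith_step β (p (k+1)) (P k) (P (k+1)) (θ (k+1))
        (h (ut k) + F (ut k) + β * bregman ν x (ut k))
        (h (ut (k+1)) + F (ut (k+1)) + β * bregman ν x (ut (k+1)))
        (bregman ν (u k) w) (bregman ν (u (k+1)) w)
        (β * bregman ν (u 0) w)
        ((Gt + dualNorm nrm (δ (k+1))) ^ 2 / (2 * β * p (k+1)) + ⟪δ (k+1), w - u k⟫)
        (∑ i ∈ Finset.Icc 1 k, (1 / (P (i - 1) * p i)) *
            ((Gt + dualNorm nrm (δ i)) ^ 2 / (2 * β * p i) + ⟪δ i, w - u (i - 1)⟫))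
        (h w + F w + β * bregman ν x w)
        hβ hq hQ hR hR1 (by linarith [hrec]) hθv hstep' ih
      linarith [this]
  -- conversion to the final form
  have haux' := haux t
  have hPt := (hPfacts t).1
  have h1Pt : (0:ℝ) < 1 - P t := by linarith [hPlt1 t ht]
  have hPt0 : P t ≠ 0 := ne_of_gt hPt
  have h1Pt0 : (1:ℝ) - P t ≠ 0 := ne_of_gt h1Pt
  have hc : (0:ℝ) ≤ P t / (1 - P t) := by positivity
  have em := mul_le_mul_of_nonneg_left haux' hc
  have q1 : P t / (1 - P t) * ((1 - P t)/(P t) * ((h (ut t) + F (ut t) + β * bregman ν x (ut t)) -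
      (h w + F w + β * bregman ν x w)))
      = (h (ut t) + F (ut t) + β * bregman ν x (ut t)) - (h w + F w + β * bregman ν x w) := by
    field_simp
  have q2 : P t / (1 - P t) * (β / P t * bregman ν (u t) w)
      = β / (1 - P t) * bregman ν (u t) w := by
    field_simp
  have q3 : P t / (1 - P t) * (β * bregman ν (u 0) w)
      = β * P t / (1 - P t) * bregman ν (u 0) w := by
    field_simp
  linarith [em, q1, q2, q3]
end

section
/- Let ‖·‖ be a norm on ℝⁿ with dual norm ‖·‖_*, let ν : ℝⁿ → ℝ be differentiable and 1-strongly convex w.r.t. ‖·‖ with Bregman divergence V, let g : ℝⁿ → ℝ be convex, differentiable and L-smooth w.r.t. ‖·‖ (i.e., g(x) ≤ g(y) + ⟨∇g(y), x − y⟩ + (L/2)‖x − y‖² for all x, y), let F : ℝⁿ → ℝ be convex, and set Ψ = F + g. Let x̄', x', x̃ ∈ ℝⁿ, γ ∈ [0, 1], β ≥ 0 with β − L γ ≥ 0. Define x̲ = (1 − γ) x̄' + γ x', x̄ = (1 − γ) x̄' + γ x̃, and Φ(u) = g(x̲) + ⟨∇g(x̲), u − x̲⟩ + F(u) + β V(x',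 u). Then Ψ(x̄) ≤ (1 − γ) Ψ(x̄') + γ Φ(x̃). -/
open Set
open scoped RealInnerProductSpace

lemma convex_grad_ineq {n : ℕ} (g : EuclideanSpace ℝ (Fin n) → ℝ)
    (hg_conv : ConvexOn ℝ Set.univ g) (hg_diff : Differentiable ℝ g)
    (x y : EuclideanSpace ℝ (Fin n)) :
    g x + ⟪gradient g x, y - x⟫ ≤ g y := by
  set v := y - x with hv
  set φ : ℝ → ℝ := fun t => g (x + t • v) with hφ
  have hc : ∀ t : ℝ, HasDerivAt φ ⟪gradient g (x + t • v), v⟫ t := by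
    intro t
    have hcurve : HasDerivAt (fun t : ℝ => x + t • v) v t := by
      simpa using ((hasDerivAt_id t).smul_const v).const_add x
    have hgrad := (hg_diff (x + t • v)).hasGradientAt
    have := (hasGradientAt_iff_hasFDerivAt.mp hgrad).comp_hasDerivAt t hcurve
    simp at this ⊢
    exact this
  have hφconv : ConvexOn ℝ Set.univ φ := by
    have := hg_conv.comp_affineMap (AffineMap.lineMap x y)
    have heq : φ = g ∘ (AffineMap.lineMap x y) := by
      funext t
      simp [hφ, AffineMap.lineMap_apply_module, hv]
      ring_nf
      congr 1
      module
    rw [heq]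
    simpa using this
  have := hφconv.le_slope_of_hasDerivAt (mem_univ (0 : ℝ)) (mem_univ (1 : ℝ))
    zero_lt_one (hc 0)
  have h0 : φ 0 = g x := by simp [hφ]
  have h1 : φ 1 = g y := by simp [hφ, hv]
  rw [slope_def_field] at this
  simp only [h0, h1, zero_smul, add_zero, sub_zero, div_one] at this
  linarith

/-- outer-loop one-step inequality: with `ν` 1-strongly convex
w.r.t. a norm `‖·‖`, `g` convex differentiable and `L`-smooth w.r.t. `‖·‖`, `F`
convex, `Ψ = F + g`, `γ ∈ [0,1]`, `β ≥ 0`, `β − Lγ ≥ 0`,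
`x̲ = (1−γ)x̄' + γx'`, `x̄ = (1−γ)x̄' + γx̃`, and
`Φ(u) = g(x̲) + ⟨∇g(x̲), u − x̲⟩ + F(u) + βV(x', u)`, one has
`Ψ(x̄) ≤ (1−γ)Ψ(x̄') + γΦ(x̃)`. -/
theorem outer_step_inequality {n : ℕ}
    -- `nrm` is a norm `‖·‖` on `ℝⁿ`
    (nrm : EuclideanSpace ℝ (Fin n) → ℝ)
    (hn_add : ∀ x y, nrm (x + y) ≤ nrm x + nrm y)
    (hn_smul : ∀ (c : ℝ) x, nrm (c • x) = |c| * nrm x)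
    (hn_def : ∀ x, nrm x = 0 → x = 0)
    -- `ν` is differentiable and 1-strongly convex w.r.t. `nrm`, `V = bregman ν`
    (ν : EuclideanSpace ℝ (Fin n) → ℝ) (hν_diff : Differentiable ℝ ν)
    (hν_strong : ∀ x y, (1 / 2) * (nrm (x - y)) ^ 2 ≤ bregman ν x y)
    -- `g` is convex, differentiable and `L`-smooth w.r.t. `nrm`
    (g : EuclideanSpace ℝ (Fin n) → ℝ) (hg_conv : ConvexOn ℝ Set.univ g)
    (hg_diff : Differentiable ℝ g)
    (L : ℝ)
    (hg_smooth : ∀ x y, g x ≤ g y + ⟪gradient g y, x - y⟫ + L / 2 * (nrm (x - y)) ^ 2)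
    -- `F` is convex
    (F : EuclideanSpace ℝ (Fin n) → ℝ) (hF_conv : ConvexOn ℝ Set.univ F)
    (xbar' x' xt : EuclideanSpace ℝ (Fin n))
    (γ : ℝ) (hγ : γ ∈ Set.Icc (0 : ℝ) 1)
    (β : ℝ) (hβ : 0 ≤ β) (hβL : β - L * γ ≥ 0) :
    (fun u => F u + g u) ((1 - γ) • xbar' + γ • xt) ≤
      (1 - γ) * (fun u => F u + g u) xbar' +
        γ * (g ((1 - γ) • xbar' + γ • x') +
          ⟪gradient g ((1 - γ) • xbar' + γ • x'), xt - ((1 - γ) • xbar' + γ • x')⟫ +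
          F xt + β * bregman ν x' xt) := by
  obtain ⟨hγ0, hγ1⟩ := hγ
  set xl : EuclideanSpace ℝ (Fin n) := (1 - γ) • xbar' + γ • x' with hxl
  set xb : EuclideanSpace ℝ (Fin n) := (1 - γ) • xbar' + γ • xt with hxb
  have hdiff : xb - xl = γ • (xt - x') := by rw [hxb, hxl]; module
  -- smoothness bound
  have hA : g xb ≤ g xl + ⟪gradient g xl, xb - xl⟫ + L / 2 * (nrm (xb - xl)) ^ 2 :=
    hg_smooth xb xl
  -- norm computation
  have hnrm : nrm (xb - xl) = γ * nrm (xt - x') := by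
    rw [hdiff, hn_smul, abs_of_nonneg hγ0]
  -- inner product decomposition
  have hsplit : xb - xl = (1 - γ) • (xbar' - xl) + γ • (xt - xl) := by
    rw [hxb, hxl]; module
  have hC : ⟪gradient g xl, xb - xl⟫ =
      (1 - γ) * ⟪gradient g xl, xbar' - xl⟫ + γ * ⟪gradient g xl, xt - xl⟫ := by
    rw [hsplit, inner_add_right, real_inner_smul_right, real_inner_smul_right]
  -- convexity of g
  have hD : g xl + ⟪gradient g xl, xbar' - xl⟫ ≤ g xbar' :=
    convex_grad_ineq g hg_conv hg_diff xl xbar'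
  -- convexity of F
  have hE : F xb ≤ (1 - γ) * F xbar' + γ * F xt := by
    have := hF_conv.2 (mem_univ xbar') (mem_univ xt) (by linarith : (0:ℝ) ≤ 1 - γ) hγ0
      (by ring : (1 - γ) + γ = 1)
    simpa [hxb] using this
  -- norm symmetry
  have hsym : nrm (x' - xt) = nrm (xt - x') := by
    have : x' - xt = (-1 : ℝ) • (xt - x') := by module
    rw [this, hn_smul]; norm_num
  -- strong convexity bound
  have hV : (1 / 2) * (nrm (xt - x')) ^ 2 ≤ bregman ν x' xt := by
    have := hν_strong x' xt
    rwa [hsym] at this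
  have hN0 : 0 ≤ nrm (xt - x') := by
    by_contra h
    push_neg at h
    have h2 := hn_add (xt - x') (-(xt - x'))
    have h3 : nrm (-(xt - x')) = nrm (xt - x') := by
      have : -(xt - x') = (-1 : ℝ) • (xt - x') := by module
      rw [this, hn_smul]; norm_num
    have h4 : nrm 0 = 0 := by
      have : (0 : EuclideanSpace ℝ (Fin n)) = (0 : ℝ) • (0 : EuclideanSpace ℝ (Fin n)) := by
        simp
      rw [this, hn_smul]; simp
    simp [h3, h4] at h2
    linarith
  -- quadratic bound
  have hF2 : L / 2 * (nrm (xb - xl)) ^ 2 ≤ γ * β * bregman ν x' xt := by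
    rw [hnrm]
    have h1 : L / 2 * (γ * nrm (xt - x')) ^ 2 ≤ γ * β * ((1 / 2) * (nrm (xt - x')) ^ 2) := by
      nlinarith [sq_nonneg (nrm (xt - x')), mul_nonneg hγ0 hβL.le]
    have h2 : γ * β * ((1 / 2) * (nrm (xt - x')) ^ 2) ≤ γ * β * bregman ν x' xt :=
      mul_le_mul_of_nonneg_left hV (mul_nonneg hγ0 hβ)
    linarith
  simp only
  rw [hC] at hA
  nlinarith [mul_le_mul_of_nonneg_left hD (by linarith : (0:ℝ) ≤ 1 - γ)]
end
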